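/- For all positive integers n and k with 1 ≤ k ≤ n, n · Σ_{λ_1+...+λ_k=n, λ_i>0} Cat(λ_1 - 1) · Cat(λ_2 - 1) · ... · Cat(λ_k - 1) = k · C(2n-k-1, n-1), where the sum runs over all ordered compositions of n into exactly k positive parts and Cat(m) denotes the m-th Catalan number. That is, the compositae of the shifted Catalan generating function F(x) = Σ_{m≥1} Cat(m-1) x^m is F^Δ(n,k) = (k/n) C(2n-k-1, n-1). -/

import Mathlib

open Finset PowerSeries

/-! Auxiliary: generating function of Catalan numbers. -/

noncomputable def Cgf : PowerSeries ℕ := PowerSeries.mk catalan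

lemma Cgf_eq : Cgf = 1 + PowerSeries.X * Cgf ^ 2 := by
  ext n
  cases n with
  | zero => simp [Cgf]
  | succ n =>
    rw [map_add, PowerSeries.coeff_succ_X_mul, sq, PowerSeries.coeff_mul]
    simp [Cgf, catalan_succ' n]

lemma coeff_zero_Cgf_pow (k : ℕ) : (PowerSeries.coeff 0) (Cgf ^ k) = 1 := by
  rw [PowerSeries.coeff_zero_eq_constantCoeff, map_pow]
  simp [Cgf, ← PowerSeries.coeff_zero_eq_constantCoeff]

lemma Cgf_pow_rec (k : ℕ) :
    Cgf ^ (k + 1) = Cgf ^ k + PowerSeries.X * Cgf ^ (k + 2) := by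
  calc Cgf ^ (k + 1) = Cgf ^ k * Cgf := by ring
    _ = Cgf ^ k * (1 + PowerSeries.X * Cgf ^ 2) := by rw [← Cgf_eq]
    _ = Cgf ^ k + PowerSeries.X * Cgf ^ (k + 2) := by ring

lemma coeff_rec (m k : ℕ) :
    (PowerSeries.coeff (m + 1)) (Cgf ^ (k + 1)) =
      (PowerSeries.coeff (m + 1)) (Cgf ^ k)
        + (PowerSeries.coeff m) (Cgf ^ (k + 2)) := by
  rw [Cgf_pow_rec, map_add, PowerSeries.coeff_succ_X_mul]

lemma catalan_choose (n : ℕ) : catalan n + (2 * n).choose (n + 1) = (2 * n).choose n := by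
  have h1 : (n + 1) * catalan n = (2 * n).choose n := by
    have := succ_mul_catalan_eq_centralBinom n
    rwa [Nat.centralBinom] at this
  have h2 : (2 * n).choose (n + 1) * (n + 1) = (2 * n).choose n * n := by
    have := Nat.choose_succ_right_eq (2 * n) n
    rwa [show 2 * n - n = n by omega] at this
  apply Nat.eq_of_mul_eq_mul_left (Nat.succ_pos n)
  nlinarith [h1, h2]

/-- Closed form for the coefficients of powers of the Catalan generating function
(ballot numbers). -/
lemma coeff_closed (m : ℕ) : ∀ k : ℕ,
    (PowerSeries.coeff m) (Cgf ^ (k + 1)) + (2 * m + k).choose (m + k + 1)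
      = (2 * m + k).choose m := by
  induction m with
  | zero =>
    intro k
    rw [coeff_zero_Cgf_pow]
    simp [Nat.choose_eq_zero_of_lt]
  | succ m ihm =>
    intro k
    induction k with
    | zero =>
      have h1 : (PowerSeries.coeff (m + 1)) (Cgf ^ 1) = catalan (m + 1) := by
        simp [Cgf]
      rw [h1]
      have := catalan_choose (m + 1)
      have e1 : 2 * (m + 1) = 2 * (m + 1) + 0 := by omega
      rw [e1] at this
      convert this using 3 <;> omega
    | succ k ihk =>
      have h1 := coeff_rec m (k + 1)
      have h2 := ihm (k + 2)
      rw [show k + 2 + 1 = k + 1 + 2 by omega] at h2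
      have p1 : (2 * (m + 1) + (k + 1)).choose (m + 1)
          = (2 * m + (k + 2)).choose m + (2 * m + (k + 2)).choose (m + 1) := by
        rw [show 2 * (m + 1) + (k + 1) = (2 * m + (k + 2)) + 1 by omega]
        exact Nat.choose_succ_succ' (2 * m + (k + 2)) m
      have p2 : (2 * (m + 1) + (k + 1)).choose (m + 1 + (k + 1) + 1)
          = (2 * m + (k + 2)).choose (m + (k + 2)) + (2 * m + (k + 2)).choose (m + (k + 2) + 1) := by
        rw [show 2 * (m + 1) + (k + 1) = (2 * m + (k + 2)) + 1 by omega,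
          show m + 1 + (k + 1) + 1 = (m + (k + 2)) + 1 by omega]
        exact Nat.choose_succ_succ' (2 * m + (k + 2)) (m + (k + 2))
      have hk' : (2 * (m + 1) + k).choose (m + 1 + k + 1) = (2 * m + (k + 2)).choose (m + (k + 2)) := by
        congr 1 <;> omega
      have hk'' : (2 * (m + 1) + k).choose (m + 1) = (2 * m + (k + 2)).choose (m + 1) := by
        congr 1; omega
      rw [hk', hk''] at ihk
      rw [h1, p1, p2]
      omega

lemma binom_identity (m j : ℕ) :
    (m + j + 1) * (2 * m + j).choose m
      = (m + j + 1) * (2 * m + j).choose (m + j + 1) + (j + 1) * (2 * m + j).choose (m + j) := by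
  cases m with
  | zero => simp [Nat.choose_eq_zero_of_lt]
  | succ m =>
    set N := 2 * (m + 1) + j with hN
    have hsym1 : N.choose (m + 1 + j + 1) = N.choose m := by
      rw [← Nat.choose_symm (by omega : m + 1 + j + 1 ≤ N)]
      congr 1; omega
    have hsym2 : N.choose (m + 1 + j) = N.choose (m + 1) := by
      rw [← Nat.choose_symm (by omega : m + 1 + j ≤ N)]
      congr 1; omega
    have hr : N.choose (m + 1) * (m + 1) = N.choose m * (m + j + 2) := by
      have := Nat.choose_succ_right_eq N m
      rwa [show N - m = m + j + 2 by omega] at this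
    rw [hsym1, hsym2]
    nlinarith [hr]

noncomputable def tupJ {k : ℕ} (c : Fin k → ℕ) : ℕ →₀ ℕ :=
  ∑ i : Fin k, Finsupp.single (i : ℕ) (c i)

lemma tupJ_apply {k : ℕ} (c : Fin k → ℕ) (x : ℕ) :
    tupJ c x = if h : x < k then c ⟨x, h⟩ else 0 := by
  rw [tupJ, Finsupp.finset_sum_apply]
  split_ifs with h
  · rw [Finset.sum_eq_single (⟨x, h⟩ : Fin k)]
    · simp [Finsupp.single_apply]
    · intro b _ hb
      rw [Finsupp.single_apply, if_neg]
      intro hbx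
      exact hb (Fin.ext hbx)
    · simp
  · apply Finset.sum_eq_zero
    intro i _
    rw [Finsupp.single_apply, if_neg]
    omega

lemma finsuppAntidiag_sum_eq (k n : ℕ) (f : ℕ → ℕ) :
    ∑ l ∈ Finset.finsuppAntidiag (Finset.range k) n, ∏ i ∈ Finset.range k, f (l i)
      = ∑ c ∈ Finset.Nat.antidiagonalTuple k n, ∏ i : Fin k, f (c i) := by
  apply Finset.sum_nbij' (i := fun l => fun i : Fin k => l (i : ℕ)) (j := fun c => tupJ c)
  · intro l hl
    rw [Finset.mem_finsuppAntidiag] at hl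
    rw [Finset.Nat.mem_antidiagonalTuple]
    rw [← hl.1, Finset.sum_range]
  · intro c hc
    rw [Finset.Nat.mem_antidiagonalTuple] at hc
    rw [Finset.mem_finsuppAntidiag]
    constructor
    · rw [Finset.sum_range, ← hc]
      apply Finset.sum_congr rfl
      intro i _
      rw [tupJ_apply]
      simp [i.isLt]
    · intro x hx
      rw [Finsupp.mem_support_iff] at hx
      rw [Finset.mem_range]
      by_contra h
      rw [tupJ_apply, dif_neg (by omega)] at hx
      exact hx rfl
  · intro l hl
    rw [Finset.mem_finsuppAntidiag] at hl
    ext x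
    rw [tupJ_apply]
    split_ifs with h
    · rfl
    · by_contra hx
      have := hl.2 (Finsupp.mem_support_iff.mpr (fun h' => hx h'.symm))
      rw [Finset.mem_range] at this
      omega
  · intro c _
    funext i
    rw [tupJ_apply, dif_pos i.isLt]
  · intro l _
    rw [Finset.prod_range]

/-- The coefficient of the k-th power of the shifted Catalan generating function equals
the composition sum. -/
lemma coeff_shifted_pow (k n : ℕ) :
    (PowerSeries.coeff n) ((PowerSeries.X * Cgf) ^ k)
      = ∑ c ∈ (Finset.Nat.antidiagonalTuple k n).filter (fun c => ∀ i, 0 < c i),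
          ∏ i, catalan (c i - 1) := by
  have hA : ∀ j : ℕ, (PowerSeries.coeff j) (PowerSeries.X * Cgf)
      = if j = 0 then 0 else catalan (j - 1) := by
    intro j
    cases j with
    | zero => simp
    | succ j => simp [PowerSeries.coeff_succ_X_mul, Cgf]
  rw [PowerSeries.coeff_pow, finsuppAntidiag_sum_eq k n
    (fun j => (PowerSeries.coeff j) (PowerSeries.X * Cgf))]
  rw [Finset.sum_filter]
  apply Finset.sum_congr rfl
  intro c _
  by_cases hc : ∀ i, 0 < c i
  · rw [if_pos hc]
    apply Finset.prod_congr rfl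
    intro i _
    rw [hA]
    rw [if_neg (by have := hc i; omega)]
  · rw [if_neg hc]
    push_neg at hc
    obtain ⟨i, hi⟩ := hc
    apply Finset.prod_eq_zero (Finset.mem_univ i)
    rw [hA, if_pos (by omega)]

theorem stmt_12 (n k : ℕ) (hk1 : 1 ≤ k) (hkn : k ≤ n) :
    n * ∑ c ∈ (Finset.Nat.antidiagonalTuple k n).filter (fun c => ∀ i, 0 < c i),
        ∏ i, catalan (c i - 1)
      = k * (2 * n - k - 1).choose (n - 1) := by
  rw [← coeff_shifted_pow]
  obtain ⟨j, rfl⟩ : ∃ j, k = j + 1 := ⟨k - 1, by omega⟩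
  obtain ⟨m, rfl⟩ : ∃ m, n = m + j + 1 := ⟨n - j - 1, by omega⟩
  have hcoeff : (PowerSeries.coeff (m + j + 1)) ((PowerSeries.X * Cgf) ^ (j + 1))
      = (PowerSeries.coeff m) (Cgf ^ (j + 1)) := by
    rw [mul_pow, PowerSeries.coeff_X_pow_mul']
    rw [if_pos (by omega), show m + j + 1 - (j + 1) = m by omega]
  rw [hcoeff]
  have hP := coeff_closed m j
  have hB := binom_identity m j
  have e1 : 2 * (m + j + 1) - (j + 1) - 1 = 2 * m + j := by omega
  have e2 : m + j + 1 - 1 = m + j := by omega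
  rw [e1, e2]
  have hmul : (m + j + 1) * ((PowerSeries.coeff m) (Cgf ^ (j + 1)))
      + (m + j + 1) * (2 * m + j).choose (m + j + 1)
      = (m + j + 1) * (2 * m + j).choose m := by
    rw [← Nat.mul_add, hP]
  linarith [hmul, hB]
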